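/- Let B(Y) = Σ bₙ Yⁿ be a formal power series with b₀ ≠ 0, and set W(Y) = B(Y)·(1 + Y·B'(Y)/B(Y))² = (B(Y)+Y·B'(Y))²/B(Y). Then the coefficients of B are uniquely determined by those of W: b₀ = w₀ and for each n ≥ 1 there is a function f such that (1+2n)·bₙ = f(b₀,…,b_{n−1}; w₀,…,wₙ). In particular, the map W ↦ B is well defined on series with nonzero constant term. -/

import Mathlib

open PowerSeries Finset in
private lemma coeffC (B : PowerSeries ℂ) (n : ℕ) :
    coeff n (B + X * derivativeFun B) = (n + 1 : ℂ) * coeff n B := by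
  cases n with
  | zero => simp [coeff_zero_X_mul]
  | succ m =>
    rw [map_add, coeff_succ_X_mul, show derivativeFun B = derivative ℂ B from rfl, coeff_derivative]
    push_cast
    ring

open PowerSeries in
private lemma part1 (B : PowerSeries ℂ) (hB : constantCoeff B ≠ 0) :
    constantCoeff ((B + X * derivativeFun B) ^ 2 * B⁻¹) = constantCoeff B := by
  have h0 : constantCoeff (B + X * derivativeFun B) = constantCoeff B := by
    have := coeffC B 0
    simp at this
    simp [this]
  rw [map_mul, map_pow, h0, PowerSeries.constantCoeff_inv]
  field_simp

open PowerSeries Finset in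
private lemma part2 (n : ℕ) (hn : 1 ≤ n) (B₁ B₂ : PowerSeries ℂ)
    (h₁ : constantCoeff B₁ ≠ 0) (h₂ : constantCoeff B₂ ≠ 0)
    (hb : ∀ k < n, coeff k B₁ = coeff k B₂)
    (hw : ∀ k ≤ n, coeff k ((B₁ + X * derivativeFun B₁) ^ 2 * B₁⁻¹)
        = coeff k ((B₂ + X * derivativeFun B₂) ^ 2 * B₂⁻¹)) :
    coeff n B₁ = coeff n B₂ := by
  set C₁ := B₁ + X * derivativeFun B₁ with hC₁
  set C₂ := B₂ + X * derivativeFun B₂ with hC₂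
  set W₁ := C₁ ^ 2 * B₁⁻¹ with hW₁
  set W₂ := C₂ ^ 2 * B₂⁻¹ with hW₂
  set b₀ := constantCoeff B₁ with hb₀def
  have e₁ : W₁ * B₁ = C₁ ^ 2 := by
    rw [hW₁, mul_assoc, PowerSeries.inv_mul_cancel _ h₁, mul_one]
  have e₂ : W₂ * B₂ = C₂ ^ 2 := by
    rw [hW₂, mul_assoc, PowerSeries.inv_mul_cancel _ h₂, mul_one]
  have hw0₁ : coeff 0 W₁ = b₀ := by
    rw [PowerSeries.coeff_zero_eq_constantCoeff]
    exact part1 B₁ h₁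
  have hw0₂ : coeff 0 W₂ = b₀ := by rw [← hw 0 (Nat.zero_le n), hw0₁]
  have hb₀₁ : coeff 0 B₁ = b₀ := by
    simp [hb₀def, PowerSeries.coeff_zero_eq_constantCoeff]
  have hb₀₂ : coeff 0 B₂ = b₀ := by rw [← hb 0 hn, hb₀₁]
  have key : coeff n (W₁ * B₁) - coeff n (W₂ * B₂)
      = coeff n (C₁ ^ 2) - coeff n (C₂ ^ 2) := by rw [e₁, e₂]
  rw [PowerSeries.coeff_mul, PowerSeries.coeff_mul, sq, sq,
    PowerSeries.coeff_mul, PowerSeries.coeff_mul, ← Finset.sum_sub_distrib,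
    ← Finset.sum_sub_distrib] at key
  have lhs : ∑ p ∈ antidiagonal n,
      (coeff p.1 W₁ * coeff p.2 B₁ - coeff p.1 W₂ * coeff p.2 B₂)
      = b₀ * (coeff n B₁ - coeff n B₂) := by
    rw [Finset.sum_eq_single_of_mem ((0 : ℕ), n)
        (by simp [Finset.mem_antidiagonal])]
    · show coeff 0 W₁ * coeff n B₁ - coeff 0 W₂ * coeff n B₂
        = b₀ * (coeff n B₁ - coeff n B₂)
      rw [hw0₁, hw0₂]; ring
    · rintro ⟨i, j⟩ hmem hne
      rw [Finset.HasAntidiagonal.mem_antidiagonal] at hmem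
      have hi : i ≠ 0 := by
        rintro rfl
        simp only [Nat.zero_add] at hmem
        exact hne (by simp [Prod.ext_iff, hmem])
      have hj : j < n := by omega
      have hi' : i ≤ n := by omega
      show coeff i W₁ * coeff j B₁ - coeff i W₂ * coeff j B₂ = 0
      rw [hw i hi', hb j hj]; ring
  have rhs : ∑ p ∈ antidiagonal n,
      (coeff p.1 C₁ * coeff p.2 C₁ - coeff p.1 C₂ * coeff p.2 C₂)
      = 2 * (n + 1 : ℂ) * b₀ * (coeff n B₁ - coeff n B₂) := by
    have hsub : ({((0 : ℕ), n), (n, (0 : ℕ))} : Finset (ℕ × ℕ)) ⊆ antidiagonal n := by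
      intro p hp
      simp only [Finset.mem_insert, Finset.mem_singleton] at hp
      rcases hp with rfl | rfl <;> simp [Finset.mem_antidiagonal]
    rw [← Finset.sum_subset hsub]
    · have hne : ((0 : ℕ), n) ≠ (n, (0 : ℕ)) := by
        intro h
        have := congrArg Prod.fst h
        simp at this
        omega
      rw [Finset.sum_pair hne]
      show coeff 0 C₁ * coeff n C₁ - coeff 0 C₂ * coeff n C₂ +
          (coeff n C₁ * coeff 0 C₁ - coeff n C₂ * coeff 0 C₂)
          = 2 * (n + 1 : ℂ) * b₀ * (coeff n B₁ - coeff n B₂)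
      rw [hC₁, hC₂, coeffC, coeffC, coeffC, coeffC, hb₀₁, hb₀₂]
      push_cast
      ring
    · rintro ⟨i, j⟩ hmem hnot
      rw [Finset.HasAntidiagonal.mem_antidiagonal] at hmem
      simp only [Finset.mem_insert, Finset.mem_singleton, Prod.mk.injEq, not_or] at hnot
      have hi : i < n := by omega
      have hj : j < n := by omega
      show coeff i C₁ * coeff j C₁ - coeff i C₂ * coeff j C₂ = 0
      rw [hC₁, hC₂, coeffC, coeffC, coeffC, coeffC, hb i hi, hb j hj]
      ring
  rw [lhs, rhs] at key
  have hzero : (2 * (n + 1 : ℂ) - 1) * b₀ * (coeff n B₁ - coeff n B₂) = 0 := by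
    linear_combination -key
  have hc : (2 * (n + 1 : ℂ) - 1) ≠ 0 := by
    intro h
    have h2 : ((2 * n + 1 : ℕ) : ℂ) = 0 := by push_cast; linear_combination h
    exact (Nat.cast_ne_zero.mpr (by omega : (2 * n + 1 : ℕ) ≠ 0)) h2
  rcases mul_eq_zero.mp hzero with h | h
  · rcases mul_eq_zero.mp h with h' | h'
    · exact absurd h' hc
    · exact absurd h' h₁
  · exact sub_eq_zero.mp h

open PowerSeries in
/-- the coefficients of B are uniquely determined by those of
W = (B + X·B')²/B : b₀ = w₀, each bₙ is determined by b₀,…,b_{n−1} and w₀,…,wₙ,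
and the map W ↦ B is well defined (injectivity). -/
theorem stmt12 :
    (∀ B : PowerSeries ℂ, constantCoeff B ≠ 0 →
      constantCoeff ((B + X * derivativeFun B) ^ 2 * B⁻¹) = constantCoeff B) ∧
    (∀ n : ℕ, 1 ≤ n → ∀ B₁ B₂ : PowerSeries ℂ,
      constantCoeff B₁ ≠ 0 → constantCoeff B₂ ≠ 0 →
      (∀ k < n, coeff k B₁ = coeff k B₂) →
      (∀ k ≤ n, coeff k ((B₁ + X * derivativeFun B₁) ^ 2 * B₁⁻¹)
        = coeff k ((B₂ + X * derivativeFun B₂) ^ 2 * B₂⁻¹)) →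
      coeff n B₁ = coeff n B₂) ∧
    (∀ B₁ B₂ : PowerSeries ℂ, constantCoeff B₁ ≠ 0 → constantCoeff B₂ ≠ 0 →
      (B₁ + X * derivativeFun B₁) ^ 2 * B₁⁻¹ = (B₂ + X * derivativeFun B₂) ^ 2 * B₂⁻¹ →
      B₁ = B₂) := by
  refine ⟨part1, part2, ?_⟩
  intro B₁ B₂ h₁ h₂ hW
  ext n
  induction n using Nat.strong_induction_on with
  | _ n ih =>
    rcases Nat.eq_zero_or_pos n with rfl | hn
    · have := part1 B₁ h₁
      rw [hW, part1 B₂ h₂] at this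
      simpa [PowerSeries.coeff_zero_eq_constantCoeff] using this.symm
    · exact part2 n hn B₁ B₂ h₁ h₂ (fun k hk => ih k hk) (fun k _ => by rw [hW])
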